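/- Let d ≥ 2 and for 1 ≤ i ≤ d+1 let V_i = {v_{i,j} : 1 ≤ j ≤ d} be a collection of d+1 pairwise mutually unbiased orthonormal bases of ℂ^d, and set P_{i,j} = v_{i,j} v_{i,j}*. Then for every X ∈ M_d(ℂ), (1/(d+1)) · Σ_{i=1}^{d+1} Σ_{j=1}^{d} P_{i,j} X P_{i,j} = (1/(d+1))·(X + tr(X)·I_d). Consequently, the map Z(X) = (1/(d+1))·(X + tr(X)·I_d) admits a Kraus decomposition consisting of d(d+1) rank-one operators. -/

import Mathlib

open Matrix

namespace MubAux

open Finset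

lemma sum_factor {α β : Type*} [Fintype α] [Fintype β] (F1 F2 F3 F4 : β → α → ℂ) :
    (∑ k : α, ∑ a : α, ∑ b : α, ∑ l : α, ∑ p : β, F1 p k * F2 p a * F3 p b * F4 p l)
      = ∑ p : β, (∑ x, F1 p x) * (∑ x, F2 p x) * (∑ x, F3 p x) * (∑ x, F4 p x) := by
  simp only [@Finset.sum_comm β ℂ α]
  refine Finset.sum_congr rfl fun p _ => ?_
  rw [show (∑ x, F1 p x) * (∑ x, F2 p x) * (∑ x, F3 p x) * (∑ x, F4 p x)
      = (∑ x, F4 p x) * (∑ x, F3 p x) * (∑ x, F2 p x) * (∑ x, F1 p x) by ring]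
  simp only [Finset.sum_mul, Finset.mul_sum]
  refine Finset.sum_congr rfl fun k _ => Finset.sum_congr rfl fun a _ =>
    Finset.sum_congr rfl fun b _ => Finset.sum_congr rfl fun l _ => by ring

lemma sum_factor2 {α β : Type*} [Fintype α] [Fintype β] (F1 F2 : β → α → ℂ) :
    (∑ k : α, ∑ b : α, ∑ p : β, F1 p k * F2 p b)
      = ∑ p : β, (∑ x, F1 p x) * (∑ x, F2 p x) := by
  simp only [@Finset.sum_comm β ℂ α]
  refine Finset.sum_congr rfl fun p _ => ?_
  rw [show (∑ x, F1 p x) * (∑ x, F2 p x) = (∑ x, F2 p x) * (∑ x, F1 p x) by ring]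
  simp only [Finset.sum_mul, Finset.mul_sum]
  exact Finset.sum_congr rfl fun k _ => Finset.sum_congr rfl fun b _ => by ring

lemma sum_ite_const {α : Type*} [Fintype α] (P : Prop) [Decidable P] (f g : α → ℂ) :
    ∑ x : α, (if P then f x else g x) = if P then ∑ x, f x else ∑ x, g x := by
  split_ifs <;> rfl

lemma eq_zero_of_sum_mul_conj {ι : Type*} [Fintype ι] (f : ι → ℂ)
    (h : ∑ x, f x * (starRingEnd ℂ) (f x) = 0) (x : ι) : f x = 0 := by
  have h' : ∑ x, (Complex.normSq (f x) : ℂ) = 0 := by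
    simpa [Complex.mul_conj] using h
  have h2 : ∑ x, Complex.normSq (f x) = 0 := by exact_mod_cast h'
  have := (Finset.sum_eq_zero_iff_of_nonneg
    (fun x _ => Complex.normSq_nonneg (f x))).mp h2 x (Finset.mem_univ x)
  exact Complex.normSq_eq_zero.mp this

abbrev Idx (d : ℕ) := Fin (d + 1) × Fin d

noncomputable def gg {d : ℕ} (w : Idx d → Fin d → ℂ) (p q : Idx d) : ℂ :=
  ∑ x, (starRingEnd ℂ) (w p x) * w q x

section Key

variable {d : ℕ}

local notation "𝔠" => (starRingEnd ℂ)

lemma mub_key (hd : d ≠ 0) (w : Idx d → Fin d → ℂ)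
    (hsame : ∀ i j j', gg w (i, j) (i, j') = if j = j' then 1 else 0)
    (hcross : ∀ p q : Idx d, p.1 ≠ q.1 → 𝔠 (gg w p q) * gg w p q = ((d : ℂ))⁻¹)
    (k a b l : Fin d) :
    ∑ p : Idx d, w p k * 𝔠 (w p a) * w p b * 𝔠 (w p l)
      = (if k = a then 1 else 0) * (if b = l then 1 else 0)
        + (if k = l then 1 else 0) * (if a = b then 1 else 0) := by
  classical
  have hdC : (d : ℂ) ≠ 0 := Nat.cast_ne_zero.mpr hd
  set T : Fin d → Fin d → Fin d → Fin d → ℂ :=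
    fun k a b l => ∑ p : Idx d, w p k * 𝔠 (w p a) * w p b * 𝔠 (w p l) with hT
  set G : Fin d → Fin d → Fin d → Fin d → ℂ :=
    fun k a b l => (if k = a then (1:ℂ) else 0) * (if b = l then 1 else 0)
        + (if k = l then (1:ℂ) else 0) * (if a = b then 1 else 0) with hG
  have hcT : ∀ k a b l, 𝔠 (T k a b l) = ∑ q : Idx d, 𝔠 (w q k) * w q a * 𝔠 (w q b) * w q l := by
    intro k a b l
    simp only [hT, _root_.map_sum, _root_.map_mul, Complex.conj_conj]
  have hcG : ∀ k a b l, 𝔠 (G k a b l) = G k a b l := by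
    intro k a b l
    simp only [hG, _root_.map_add, _root_.map_mul, apply_ite 𝔠, _root_.map_one, _root_.map_zero]
  have hgpp : ∀ p : Idx d, gg w p p = 1 := by
    intro p
    simpa using hsame p.1 p.2 p.2
  have hcgg : ∀ p q : Idx d, (∑ x, w p x * 𝔠 (w q x)) = 𝔠 (gg w p q) := by
    intro p q
    simp only [gg, _root_.map_sum, _root_.map_mul, Complex.conj_conj]
  -- value of the squared overlap
  have hval : ∀ p q : Idx d, (𝔠 (gg w p q) * gg w p q) ^ 2
      = if p.1 = q.1 then (if p.2 = q.2 then 1 else 0) else ((d:ℂ) ^ 2)⁻¹ := by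
    intro p q
    by_cases h : p.1 = q.1
    · obtain ⟨i, j⟩ := p; obtain ⟨i', j'⟩ := q
      simp only at h
      subst h
      rw [if_pos rfl, hsame]
      split_ifs <;> simp
    · rw [hcross p q h, if_neg h]
      rw [← inv_pow]
  -- piece A
  have hA : (∑ k, ∑ a, ∑ b, ∑ l, T k a b l * 𝔠 (T k a b l))
      = 2 * (d:ℂ)^2 + 2 * d := by
    have e1 : ∀ k a b l : Fin d, T k a b l * 𝔠 (T k a b l)
        = ∑ r : Idx d × Idx d, (w r.1 k * 𝔠 (w r.2 k)) * (𝔠 (w r.1 a) * w r.2 a)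
            * (w r.1 b * 𝔠 (w r.2 b)) * (𝔠 (w r.1 l) * w r.2 l) := by
      intro k a b l
      rw [hcT, hT]
      rw [Finset.sum_mul_sum, ← Finset.sum_product', Finset.univ_product_univ]
      exact Fintype.sum_congr _ _ fun r => by ring
    calc (∑ k, ∑ a, ∑ b, ∑ l, T k a b l * 𝔠 (T k a b l))
        = ∑ k, ∑ a, ∑ b, ∑ l, ∑ r : Idx d × Idx d,
            (w r.1 k * 𝔠 (w r.2 k)) * (𝔠 (w r.1 a) * w r.2 a)
            * (w r.1 b * 𝔠 (w r.2 b)) * (𝔠 (w r.1 l) * w r.2 l) := by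
          simp only [e1]
      _ = ∑ r : Idx d × Idx d, (∑ x, w r.1 x * 𝔠 (w r.2 x)) * (∑ x, 𝔠 (w r.1 x) * w r.2 x)
            * (∑ x, w r.1 x * 𝔠 (w r.2 x)) * (∑ x, 𝔠 (w r.1 x) * w r.2 x) :=
          sum_factor _ _ _ _
      _ = ∑ r : Idx d × Idx d, (𝔠 (gg w r.1 r.2) * gg w r.1 r.2) ^ 2 := by
          refine Fintype.sum_congr _ _ fun r => ?_
          rw [hcgg]
          show 𝔠 (gg w r.1 r.2) * (gg w r.1 r.2) * 𝔠 (gg w r.1 r.2) * (gg w r.1 r.2) = _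
          ring
      _ = ∑ r : Idx d × Idx d,
            (if r.1.1 = r.2.1 then (if r.1.2 = r.2.2 then 1 else 0) else ((d:ℂ) ^ 2)⁻¹) :=
          Fintype.sum_congr _ _ fun r => hval r.1 r.2
      _ = 2 * (d:ℂ)^2 + 2 * d := by
          rw [← Finset.univ_product_univ, Finset.sum_product]
          dsimp only
          have inner : ∀ p : Idx d, (∑ q : Idx d,
              if p.1 = q.1 then (if p.2 = q.2 then (1:ℂ) else 0) else ((d:ℂ) ^ 2)⁻¹) = 2 := by
            intro p
            rw [← Finset.univ_product_univ, Finset.sum_product]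
            dsimp only
            have h1 : ∀ i' : Fin (d+1),
                (∑ j' : Fin d, if p.1 = i' then (if p.2 = j' then (1:ℂ) else 0) else ((d:ℂ)^2)⁻¹)
                  = if p.1 = i' then 1 else (d:ℂ)⁻¹ := by
              intro i'
              rw [sum_ite_const]
              split_ifs with h
              · simp
              · rw [Finset.sum_const, Finset.card_univ, Fintype.card_fin, nsmul_eq_mul]
                field_simp
            simp only [h1]
            have h2 : ∀ i' : Fin (d+1), (if p.1 = i' then (1:ℂ) else (d:ℂ)⁻¹)
                = (d:ℂ)⁻¹ + (if p.1 = i' then 1 - (d:ℂ)⁻¹ else 0) := by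
              intro i'; split_ifs <;> ring
            simp only [h2, Finset.sum_add_distrib, Finset.sum_const, Finset.card_univ,
              Fintype.card_fin, nsmul_eq_mul, Finset.sum_ite_eq, Finset.mem_univ, if_true]
            push_cast
            field_simp
            ring
          simp only [inner, Finset.sum_const, Finset.card_univ, Fintype.card_prod,
            Fintype.card_fin, nsmul_eq_mul]
          push_cast
          ring

  -- collapse helper: sums of T over coincident indices
  have hTkkbb : (∑ k, ∑ b, T k k b b) = ((d:ℂ) + 1) * d := by
    calc (∑ k, ∑ b, T k k b b)
        = ∑ k, ∑ b, ∑ p : Idx d, (w p k * 𝔠 (w p k)) * (w p b * 𝔠 (w p b)) := by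
          refine Finset.sum_congr rfl fun k _ => Finset.sum_congr rfl fun b _ => ?_
          rw [hT]
          exact Fintype.sum_congr _ _ fun p => by ring
      _ = ∑ p : Idx d, (∑ x, w p x * 𝔠 (w p x)) * (∑ x, w p x * 𝔠 (w p x)) :=
          sum_factor2 _ _
      _ = ∑ _p : Idx d, (1:ℂ) := by
          refine Fintype.sum_congr _ _ fun p => ?_
          rw [hcgg, hgpp]
          simp
      _ = ((d:ℂ) + 1) * d := by
          simp only [Finset.sum_const, Finset.card_univ, Fintype.card_prod, Fintype.card_fin,
            nsmul_eq_mul, mul_one]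
          push_cast
          ring
  have hTkaak : (∑ k, ∑ a, T k a a k) = ((d:ℂ) + 1) * d := by
    calc (∑ k, ∑ a, T k a a k)
        = ∑ k, ∑ a, ∑ p : Idx d, (w p k * 𝔠 (w p k)) * (𝔠 (w p a) * w p a) := by
          refine Finset.sum_congr rfl fun k _ => Finset.sum_congr rfl fun a _ => ?_
          rw [hT]
          exact Fintype.sum_congr _ _ fun p => by ring
      _ = ∑ p : Idx d, (∑ x, w p x * 𝔠 (w p x)) * (∑ x, 𝔠 (w p x) * w p x) :=
          sum_factor2 _ _
      _ = ∑ _p : Idx d, (1:ℂ) := by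
          refine Fintype.sum_congr _ _ fun p => ?_
          rw [hcgg]
          show 𝔠 (gg w p p) * gg w p p = 1
          rw [hgpp]
          simp
      _ = ((d:ℂ) + 1) * d := by
          simp only [Finset.sum_const, Finset.card_univ, Fintype.card_prod, Fintype.card_fin,
            nsmul_eq_mul, mul_one]
          push_cast
          ring
  have hcTkkbb : (∑ k, ∑ b, 𝔠 (T k k b b)) = ((d:ℂ) + 1) * d := by
    calc (∑ k, ∑ b, 𝔠 (T k k b b))
        = ∑ k, ∑ b, ∑ p : Idx d, (𝔠 (w p k) * w p k) * (𝔠 (w p b) * w p b) := by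
          refine Finset.sum_congr rfl fun k _ => Finset.sum_congr rfl fun b _ => ?_
          rw [hcT]
          exact Fintype.sum_congr _ _ fun p => by ring
      _ = ∑ p : Idx d, (∑ x, 𝔠 (w p x) * w p x) * (∑ x, 𝔠 (w p x) * w p x) :=
          sum_factor2 _ _
      _ = ∑ _p : Idx d, (1:ℂ) := by
          refine Fintype.sum_congr _ _ fun p => ?_
          show gg w p p * gg w p p = 1
          rw [hgpp]
          simp
      _ = ((d:ℂ) + 1) * d := by
          simp only [Finset.sum_const, Finset.card_univ, Fintype.card_prod, Fintype.card_fin,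
            nsmul_eq_mul, mul_one]
          push_cast
          ring
  have hcTkaak : (∑ k, ∑ a, 𝔠 (T k a a k)) = ((d:ℂ) + 1) * d := by
    calc (∑ k, ∑ a, 𝔠 (T k a a k))
        = ∑ k, ∑ a, ∑ p : Idx d, (𝔠 (w p k) * w p k) * (w p a * 𝔠 (w p a)) := by
          refine Finset.sum_congr rfl fun k _ => Finset.sum_congr rfl fun a _ => ?_
          rw [hcT]
          exact Fintype.sum_congr _ _ fun p => by ring
      _ = ∑ p : Idx d, (∑ x, 𝔠 (w p x) * w p x) * (∑ x, w p x * 𝔠 (w p x)) :=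
          sum_factor2 _ _
      _ = ∑ _p : Idx d, (1:ℂ) := by
          refine Fintype.sum_congr _ _ fun p => ?_
          rw [hcgg]
          show gg w p p * 𝔠 (gg w p p) = 1
          rw [hgpp]
          simp
      _ = ((d:ℂ) + 1) * d := by
          simp only [Finset.sum_const, Finset.card_univ, Fintype.card_prod, Fintype.card_fin,
            nsmul_eq_mul, mul_one]
          push_cast
          ring
  -- piece B
  have hB : (∑ k, ∑ a, ∑ b, ∑ l, T k a b l * G k a b l)
      = 2 * (((d:ℂ) + 1) * d) := by
    have e : ∀ k a b l : Fin d, T k a b l * G k a b l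
        = (if k = a then (if b = l then T k a b l else 0) else 0)
          + (if k = l then (if a = b then T k a b l else 0) else 0) := by
      intro k a b l
      simp only [hG]
      split_ifs <;> ring
    simp only [e, Finset.sum_add_distrib, sum_ite_const, Finset.sum_ite_eq,
      Finset.mem_univ, if_true, Finset.sum_const_zero]
    rw [hTkkbb, hTkaak]
    ring
  -- piece C
  have hC : (∑ k, ∑ a, ∑ b, ∑ l, G k a b l * 𝔠 (T k a b l))
      = 2 * (((d:ℂ) + 1) * d) := by
    have e : ∀ k a b l : Fin d, G k a b l * 𝔠 (T k a b l)
        = (if k = a then (if b = l then 𝔠 (T k a b l) else 0) else 0)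
          + (if k = l then (if a = b then 𝔠 (T k a b l) else 0) else 0) := by
      intro k a b l
      simp only [hG]
      split_ifs <;> ring
    simp only [e, Finset.sum_add_distrib, sum_ite_const, Finset.sum_ite_eq,
      Finset.mem_univ, if_true, Finset.sum_const_zero]
    rw [hcTkkbb, hcTkaak]
    ring
  -- piece D
  have hD : (∑ k, ∑ a, ∑ b, ∑ l, G k a b l * G k a b l)
      = 2 * (d:ℂ)^2 + 2 * d := by
    have e : ∀ k a b l : Fin d, G k a b l * G k a b l
        = (if k = a then (if b = l then (1:ℂ) else 0) else 0)
          + (if k = l then (if a = b then (1:ℂ) else 0) else 0)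
          + (if k = a then (if a = b then (if b = l then (if k = l then (2:ℂ) else 0) else 0)
              else 0) else 0) := by
      intro k a b l
      simp only [hG]
      split_ifs <;> ring
    simp only [e, Finset.sum_add_distrib, sum_ite_const, Finset.sum_ite_eq,
      Finset.mem_univ, if_true, Finset.sum_const_zero, Finset.sum_const,
      Finset.card_univ, Fintype.card_fin, nsmul_eq_mul, mul_one, mul_zero]
    simp only [mul_ite, mul_one, mul_zero, Finset.sum_ite_eq, Finset.mem_univ, if_true,
      Finset.sum_const, Finset.card_univ, Fintype.card_fin, nsmul_eq_mul]
    ring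

  -- sum of squares is zero
  have hS : (∑ k, ∑ a, ∑ b, ∑ l,
      (T k a b l - G k a b l) * 𝔠 (T k a b l - G k a b l)) = 0 := by
    have e : ∀ k a b l : Fin d, (T k a b l - G k a b l) * 𝔠 (T k a b l - G k a b l)
        = T k a b l * 𝔠 (T k a b l) - T k a b l * G k a b l
          - G k a b l * 𝔠 (T k a b l) + G k a b l * G k a b l := by
      intro k a b l
      rw [_root_.map_sub, hcG]
      ring
    simp only [e, Finset.sum_add_distrib, Finset.sum_sub_distrib]
    rw [hA, hB, hC, hD]
    ring
  have key0 := eq_zero_of_sum_mul_conj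
    (f := fun t : Fin d × Fin d × Fin d × Fin d =>
      T t.1 t.2.1 t.2.2.1 t.2.2.2 - G t.1 t.2.1 t.2.2.1 t.2.2.2)
    (by simp only [Fintype.sum_prod_type]; exact hS)
  have h := sub_eq_zero.mp (key0 (k, a, b, l))
  simp only [hT, hG] at h
  exact h

end Key
end MubAux

/-- The rank-one matrix `x y*` with entries `(x y*)_{k,l} = x_k * conj (y_l)`. -/
noncomputable def outer {d : ℕ} (x y : Fin d → ℂ) : Matrix (Fin d) (Fin d) ℂ :=
  fun k l => x k * (starRingEnd ℂ) (y l)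

namespace MubAux

lemma rank_smul_outer {d : ℕ} (c : ℂ) (hc : c ≠ 0) (u : Fin d → ℂ)
    (hu : ∑ x, (starRingEnd ℂ) (u x) * u x = 1) :
    (c • outer u u).rank = 1 := by
  classical
  have hu0 : u ≠ 0 := by
    intro h
    rw [h] at hu
    simp at hu
  have hmv : ∀ x : Fin d → ℂ,
      (c • outer u u).mulVec x = (c * ∑ l, (starRingEnd ℂ) (u l) * x l) • u := by
    intro x
    funext k
    simp only [Matrix.mulVec, dotProduct, Matrix.smul_apply, outer, smul_eq_mul,
      Pi.smul_apply]
    rw [Finset.mul_sum, Finset.sum_mul]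
    exact Finset.sum_congr rfl fun l _ => by ring
  have hrange : LinearMap.range (c • outer u u).mulVecLin = ℂ ∙ u := by
    apply le_antisymm
    · rintro y ⟨x, rfl⟩
      rw [Matrix.mulVecLin_apply, hmv]
      exact Submodule.smul_mem _ _ (Submodule.mem_span_singleton_self u)
    · rw [Submodule.span_singleton_le_iff_mem]
      refine ⟨c⁻¹ • u, ?_⟩
      rw [Matrix.mulVecLin_apply, Matrix.mulVec_smul, hmv, hu, mul_one, smul_smul,
        inv_mul_cancel₀ hc, one_smul]
  show Module.finrank ℂ (LinearMap.range (c • outer u u).mulVecLin) = 1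
  rw [hrange, finrank_span_singleton hu0]

lemma outer_conjTranspose {d : ℕ} (u : Fin d → ℂ) : (outer u u)ᴴ = outer u u := by
  ext k l
  simp [outer, Matrix.conjTranspose_apply, mul_comm]

end MubAux

/-- If `V_1, ..., V_{d+1}` are `d+1` pairwise mutually unbiased orthonormal bases of `ℂ^d`
with projections `P_{i,j} = v_{i,j} v_{i,j}*`, then for every `X ∈ M_d(ℂ)`,
`(1/(d+1)) ∑_{i,j} P_{i,j} X P_{i,j} = (1/(d+1)) (X + tr(X) I_d)`. Consequently the map
`Z(X) = (1/(d+1))(X + tr(X) I_d)` admits a Kraus decomposition with `d(d+1)` rank-one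
operators. -/
theorem mub_channel_eq_Z {d : ℕ} (hd : 2 ≤ d)
    (v : Fin (d + 1) → Fin d → EuclideanSpace ℂ (Fin d))
    (horth : ∀ i, Orthonormal ℂ (v i))
    (hmub : ∀ i k, i ≠ k → ∀ j l, ‖(inner ℂ (v i j) (v k l) : ℂ)‖ ^ 2 = 1 / d) :
    (∀ X : Matrix (Fin d) (Fin d) ℂ,
      ((d : ℂ) + 1)⁻¹ • ∑ i : Fin (d + 1), ∑ j : Fin d,
          outer (v i j) (v i j) * X * outer (v i j) (v i j) =
        ((d : ℂ) + 1)⁻¹ • (X + X.trace • (1 : Matrix (Fin d) (Fin d) ℂ))) ∧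
    ∃ A : Fin (d * (d + 1)) → Matrix (Fin d) (Fin d) ℂ,
      (∀ k, (A k).rank = 1) ∧
      ∀ X : Matrix (Fin d) (Fin d) ℂ,
        ((d : ℂ) + 1)⁻¹ • (X + X.trace • (1 : Matrix (Fin d) (Fin d) ℂ)) =
          ∑ k, A k * X * (A k)ᴴ := by
  classical
  have hd0 : d ≠ 0 := by omega
  set w : MubAux.Idx d → Fin d → ℂ := fun p x => v p.1 p.2 x with hw
  -- scalar forms of the hypotheses
  have hsame : ∀ (i : Fin (d+1)) (j j' : Fin d),
      MubAux.gg w (i, j) (i, j') = if j = j' then 1 else 0 := by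
    intro i j j'
    have h := orthonormal_iff_ite.mp (horth i) j j'
    rw [PiLp.inner_apply] at h
    simpa [MubAux.gg, hw, RCLike.inner_apply, mul_comm] using h
  have hcross : ∀ p q : MubAux.Idx d, p.1 ≠ q.1 →
      (starRingEnd ℂ) (MubAux.gg w p q) * MubAux.gg w p q = ((d:ℂ))⁻¹ := by
    intro p q hpq
    have h := hmub p.1 q.1 hpq p.2 q.2
    have hg : MubAux.gg w p q = (inner ℂ (v p.1 p.2) (v q.1 q.2) : ℂ) := by
      rw [PiLp.inner_apply]
      simp [MubAux.gg, hw, RCLike.inner_apply, mul_comm]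
    rw [hg]
    set z : ℂ := (inner ℂ (v p.1 p.2) (v q.1 q.2) : ℂ)
    calc (starRingEnd ℂ) z * z = ((Complex.normSq z : ℝ) : ℂ) := by
          rw [mul_comm, Complex.mul_conj]
      _ = ((‖z‖^2 : ℝ) : ℂ) := by rw [Complex.normSq_eq_norm_sq]
      _ = (((1:ℝ)/d : ℝ) : ℂ) := by rw [h]
      _ = ((d:ℂ))⁻¹ := by push_cast; ring
  have hkey := MubAux.mub_key hd0 w hsame hcross
  -- the core matrix identity
  have hPhi : ∀ X : Matrix (Fin d) (Fin d) ℂ,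
      (∑ i : Fin (d+1), ∑ j : Fin d,
        outer (v i j) (v i j) * X * outer (v i j) (v i j))
        = X + X.trace • (1 : Matrix (Fin d) (Fin d) ℂ) := by
    intro X
    ext k l
    have L1 : (∑ i : Fin (d+1), ∑ j : Fin d,
        outer (v i j) (v i j) * X * outer (v i j) (v i j)) k l
        = ∑ b, ∑ a, X a b * ((if k = a then (1:ℂ) else 0) * (if b = l then 1 else 0)
            + (if k = l then 1 else 0) * (if a = b then 1 else 0)) := by
      calc (∑ i : Fin (d+1), ∑ j : Fin d,
          outer (v i j) (v i j) * X * outer (v i j) (v i j)) k l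
          = ∑ i : Fin (d+1), ∑ j : Fin d, ∑ b, ∑ a,
              v i j k * (starRingEnd ℂ) (v i j a) * X a b
                * (v i j b * (starRingEnd ℂ) (v i j l)) := by
            simp only [Matrix.sum_apply, Matrix.mul_apply, Finset.sum_mul, outer]
        _ = ∑ p : MubAux.Idx d, ∑ b, ∑ a,
              w p k * (starRingEnd ℂ) (w p a) * X a b
                * (w p b * (starRingEnd ℂ) (w p l)) := by
            rw [← Finset.sum_product', Finset.univ_product_univ]
        _ = ∑ b, ∑ a, ∑ p : MubAux.Idx d,
              w p k * (starRingEnd ℂ) (w p a) * X a b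
                * (w p b * (starRingEnd ℂ) (w p l)) := by
            simp only [@Finset.sum_comm (Fin d) ℂ (MubAux.Idx d)]
        _ = ∑ b, ∑ a, X a b * (∑ p : MubAux.Idx d,
              w p k * (starRingEnd ℂ) (w p a) * w p b * (starRingEnd ℂ) (w p l)) := by
            refine Finset.sum_congr rfl fun b _ => Finset.sum_congr rfl fun a _ => ?_
            rw [Finset.mul_sum]
            exact Fintype.sum_congr _ _ fun p => by ring
        _ = ∑ b, ∑ a, X a b * ((if k = a then (1:ℂ) else 0) * (if b = l then 1 else 0)
              + (if k = l then 1 else 0) * (if a = b then 1 else 0)) := by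
            simp only [hkey]
    rw [L1]
    have e : ∀ b a : Fin d, X a b * ((if k = a then (1:ℂ) else 0) * (if b = l then 1 else 0)
          + (if k = l then 1 else 0) * (if a = b then 1 else 0))
        = (if b = l then (if k = a then X a b else 0) else 0)
          + (if k = l then (if a = b then X a b else 0) else 0) := by
      intro b a
      split_ifs <;> ring
    simp only [e, Finset.sum_add_distrib, MubAux.sum_ite_const, Finset.sum_ite_eq,
      Finset.sum_ite_eq', Finset.mem_univ, if_true, Finset.sum_const_zero]
    simp [Matrix.add_apply, Matrix.smul_apply, Matrix.one_apply, Matrix.trace, Matrix.diag,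
      smul_eq_mul, mul_ite, mul_one, mul_zero]
  constructor
  · intro X
    rw [hPhi X]
  · -- Kraus decomposition
    set cR : ℝ := (Real.sqrt ((d:ℝ)+1))⁻¹ with hcR
    have hspos : 0 < Real.sqrt ((d:ℝ)+1) := Real.sqrt_pos.mpr (by positivity)
    have hcC : ((cR : ℂ)) ≠ 0 := by
      simp only [ne_eq, Complex.ofReal_eq_zero, hcR]
      positivity
    have hsq : ((cR : ℂ))^2 = ((d:ℂ)+1)⁻¹ := by
      have h1 : cR^2 = ((d:ℝ)+1)⁻¹ := by
        rw [hcR, inv_pow, Real.sq_sqrt (by positivity)]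
      calc ((cR:ℂ))^2 = ((cR^2 : ℝ) : ℂ) := by push_cast; ring
        _ = ((((d:ℝ)+1)⁻¹ : ℝ) : ℂ) := by rw [h1]
        _ = ((d:ℂ)+1)⁻¹ := by push_cast; ring
    refine ⟨fun m => (cR : ℂ) • outer (v (finProdFinEquiv.symm m).2 (finProdFinEquiv.symm m).1)
        (v (finProdFinEquiv.symm m).2 (finProdFinEquiv.symm m).1), fun m => ?_, fun X => ?_⟩
    · apply MubAux.rank_smul_outer _ hcC
      have h := hsame (finProdFinEquiv.symm m).2 (finProdFinEquiv.symm m).1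
        (finProdFinEquiv.symm m).1
      simp only [if_pos rfl] at h
      simpa [MubAux.gg, hw] using h
    · have h1 : ∀ t : Fin d × Fin (d+1),
          ((cR:ℂ) • outer (v t.2 t.1) (v t.2 t.1)) * X
              * (((cR:ℂ) • outer (v t.2 t.1) (v t.2 t.1))ᴴ)
            = ((cR:ℂ)^2) • (outer (v t.2 t.1) (v t.2 t.1) * X * outer (v t.2 t.1) (v t.2 t.1)) := by
        intro t
        rw [Matrix.conjTranspose_smul, MubAux.outer_conjTranspose, Complex.star_def,
          Complex.conj_ofReal, smul_mul_assoc, smul_mul_assoc, mul_smul_comm, smul_smul, ← sq]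
      calc ((d : ℂ) + 1)⁻¹ • (X + X.trace • (1 : Matrix (Fin d) (Fin d) ℂ))
          = ((cR:ℂ)^2) • (X + X.trace • (1 : Matrix (Fin d) (Fin d) ℂ)) := by rw [hsq]
        _ = ((cR:ℂ)^2) • ∑ i : Fin (d+1), ∑ j : Fin d,
              outer (v i j) (v i j) * X * outer (v i j) (v i j) := by rw [hPhi X]
        _ = ((cR:ℂ)^2) • ∑ t : Fin d × Fin (d+1),
              outer (v t.2 t.1) (v t.2 t.1) * X * outer (v t.2 t.1) (v t.2 t.1) := by
            congr 1
            rw [← Finset.univ_product_univ, Finset.sum_product]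
            exact Finset.sum_comm
        _ = ∑ t : Fin d × Fin (d+1), ((cR:ℂ)^2) •
              (outer (v t.2 t.1) (v t.2 t.1) * X * outer (v t.2 t.1) (v t.2 t.1)) := by
            rw [Finset.smul_sum]
        _ = ∑ m : Fin (d * (d+1)),
              ((cR : ℂ) • outer (v (finProdFinEquiv.symm m).2 (finProdFinEquiv.symm m).1)
                (v (finProdFinEquiv.symm m).2 (finProdFinEquiv.symm m).1)) * X
              * (((cR : ℂ) • outer (v (finProdFinEquiv.symm m).2 (finProdFinEquiv.symm m).1)
                (v (finProdFinEquiv.symm m).2 (finProdFinEquiv.symm m).1))ᴴ) := by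
            refine Fintype.sum_equiv finProdFinEquiv _ _ fun t => ?_
            simp only [Equiv.symm_apply_apply]
            exact (h1 t).symm
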